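/- arXiv:2409.04220 — 4 statements merged into one kernel-verified Lean document; each statement's English description precedes it below -/
import Mathlib

section
/- In the supercommutative algebra Λ modeling the coordinate ring of C² for a superconformal coordinate system, the defining ideals of the diagonal and the superdiagonal satisfy the containments (Ideal.span {z₁−z₂, ζ₁−ζ₂})² ≤ Ideal.span {z₁−z₂−ζ₁ζ₂} ≤ Ideal.span {z₁−z₂, ζ₁−ζ₂}; that is, I_Δ² ⊆ I_Δˢᶜ ⊆ I_Δ. -/
set_option synthInstance.maxHeartbeats 1000000

open MvPolynomial

/-- `R = ℂ[z₁,z₂]`. -/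
abbrev Rpoly : Type := MvPolynomial (Fin 2) ℂ

/-- `Λ = ExteriorAlgebra R (Fin 2 → R)`, the free supercommutative `R`-algebra on two
odd generators `ζ₁, ζ₂`, modeling the coordinate ring of `C²` in a superconformal
coordinate system. -/
abbrev SCΛ : Type := ExteriorAlgebra Rpoly (Fin 2 → Rpoly)

/-- The even coordinates `z₁, z₂`. -/
noncomputable def zc (i : Fin 2) : SCΛ := algebraMap Rpoly SCΛ (X i)

/-- The odd coordinates `ζ₁, ζ₂`. -/
noncomputable def ζc (i : Fin 2) : SCΛ :=
  ExteriorAlgebra.ι Rpoly (Pi.single i (1 : Rpoly))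

noncomputable instance : Module SCΛ SCΛ := Semiring.toModule

lemma ι_anticomm (a b : Fin 2 → Rpoly) :
    ExteriorAlgebra.ι Rpoly a * ExteriorAlgebra.ι Rpoly b
      = -(ExteriorAlgebra.ι Rpoly b * ExteriorAlgebra.ι Rpoly a) :=
  eq_neg_of_add_eq_zero_left (ExteriorAlgebra.ι_add_mul_swap a b)

lemma mul_ι_comm (v : Fin 2 → Rpoly) (x : SCΛ) :
    ∃ y : SCΛ, ExteriorAlgebra.ι Rpoly v * x = y * ExteriorAlgebra.ι Rpoly v := by
  induction x using ExteriorAlgebra.induction with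
  | algebraMap r => exact ⟨algebraMap _ _ r, (Algebra.commutes r _).symm⟩
  | ι m => exact ⟨-ExteriorAlgebra.ι Rpoly m, by rw [ι_anticomm, neg_mul]⟩
  | mul x y hx hy =>
      obtain ⟨x', hx'⟩ := hx
      obtain ⟨y', hy'⟩ := hy
      exact ⟨x' * y', by rw [← mul_assoc, hx', mul_assoc, hy', ← mul_assoc]⟩
  | add x y hx hy =>
      obtain ⟨x', hx'⟩ := hx
      obtain ⟨y', hy'⟩ := hy
      exact ⟨x' + y', by rw [mul_add, hx', hy', add_mul]⟩

noncomputable def uΛ : SCΛ := zc 0 - zc 1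
noncomputable def θΛ : SCΛ := ζc 0 - ζc 1
noncomputable def pΛ : SCΛ := ζc 0 * ζc 1
noncomputable def sΛ : SCΛ := uΛ - pΛ

lemma ζsq (i : Fin 2) : ζc i * ζc i = 0 := ExteriorAlgebra.ι_sq_zero _

lemma ζac : ζc 0 * ζc 1 = -(ζc 1 * ζc 0) := ι_anticomm _ _

lemma θι : θΛ = ExteriorAlgebra.ι Rpoly (Pi.single 0 1 - Pi.single 1 1) := by
  rw [θΛ, map_sub]; rfl

lemma θsq : θΛ * θΛ = 0 := by rw [θι]; exact ExteriorAlgebra.ι_sq_zero _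

lemma θp : θΛ * pΛ = 0 := by
  rw [θΛ, pΛ, sub_mul, ← mul_assoc, ← mul_assoc, ζsq,
    show ζc 1 * ζc 0 = -(ζc 0 * ζc 1) from ι_anticomm _ _,
    neg_mul, mul_assoc, ζsq, mul_zero, neg_zero, zero_mul, sub_zero]

lemma pp : pΛ * pΛ = 0 := by
  rw [pΛ, ← mul_assoc]
  rw [show ζc 0 * ζc 1 * ζc 0 = -(ζc 0 * (ζc 0 * ζc 1)) by
    rw [mul_assoc, show ζc 1 * ζc 0 = -(ζc 0 * ζc 1) from
      (ι_anticomm (Pi.single 1 1) (Pi.single 0 1)), mul_neg]]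
  rw [neg_mul, ← mul_assoc (ζc 0) (ζc 0) (ζc 1), ζsq, zero_mul, zero_mul, neg_zero]

lemma ucomm (x : SCΛ) : uΛ * x = x * uΛ := by
  rw [uΛ]; unfold zc; rw [← map_sub]; exact Algebra.commutes _ _

lemma mul_θ_comm (x : SCΛ) : ∃ y : SCΛ, θΛ * x = y * θΛ := by
  rw [θι]; exact mul_ι_comm _ x

lemma usθ : uΛ * θΛ = θΛ * sΛ := by
  rw [sΛ, mul_sub, θp, sub_zero, ucomm]

lemma uus : uΛ * uΛ = (uΛ + pΛ) * sΛ := by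
  have h : (uΛ + pΛ) * (uΛ - pΛ) = uΛ * uΛ - uΛ * pΛ + (pΛ * uΛ - pΛ * pΛ) := by
    noncomm_ring
  rw [sΛ, h, pp, sub_zero, ← ucomm pΛ, sub_add_cancel]

lemma mem_span_s (x : SCΛ) : x * sΛ ∈ Ideal.span {sΛ} :=
  Submodule.mem_span_singleton.mpr ⟨x, by rw [smul_eq_mul]⟩

lemma gen_mul_mem {b : SCΛ} (hb : b ∈ Ideal.span {uΛ, θΛ}) :
    uΛ * b ∈ Ideal.span {sΛ} ∧ θΛ * b ∈ Ideal.span {sΛ} := by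
  induction hb using Submodule.span_induction with
  | mem x hx =>
      rcases hx with h | h
      · subst h
        exact ⟨uus ▸ mem_span_s _, by rw [← ucomm θΛ, usθ]; exact mem_span_s _⟩
      · rw [Set.mem_singleton_iff] at h
        subst h
        exact ⟨usθ ▸ mem_span_s _, θsq ▸ Ideal.zero_mem _⟩
  | zero => simp only [mul_zero]; exact ⟨Ideal.zero_mem _, Ideal.zero_mem _⟩
  | add x y _ _ hx hy =>
      rw [mul_add, mul_add]
      exact ⟨Ideal.add_mem _ hx.1 hy.1, Ideal.add_mem _ hx.2 hy.2⟩
  | smul r x _ hx =>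
      obtain ⟨r', hr'⟩ := mul_θ_comm r
      constructor
      · have : uΛ * (r • x) = r • (uΛ * x) := by
          rw [smul_eq_mul, smul_eq_mul, ← mul_assoc, ucomm r, mul_assoc]
        rw [this]; exact Ideal.mul_mem_left _ _ hx.1
      · have : θΛ * (r • x) = r' • (θΛ * x) := by
          rw [smul_eq_mul, smul_eq_mul, ← mul_assoc, hr', mul_assoc]
        rw [this]; exact Ideal.mul_mem_left _ _ hx.2

/-- `I_Δ² ⊆ I_Δˢᶜ ⊆ I_Δ` for the ideals of the diagonal and the superdiagonal,
where the product of (left) ideals is the `•`-product of submodules. -/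
theorem diag_sq_le_superdiag_le_diag :
    (Ideal.span {zc 0 - zc 1, ζc 0 - ζc 1}) • (Ideal.span {zc 0 - zc 1, ζc 0 - ζc 1}) ≤
      Ideal.span {zc 0 - zc 1 - ζc 0 * ζc 1} ∧
    Ideal.span {zc 0 - zc 1 - ζc 0 * ζc 1} ≤ Ideal.span {zc 0 - zc 1, ζc 0 - ζc 1} := by
  have e1 : ({zc 0 - zc 1, ζc 0 - ζc 1} : Set SCΛ) = {uΛ, θΛ} := by rw [uΛ, θΛ]
  have e2 : ({zc 0 - zc 1 - ζc 0 * ζc 1} : Set SCΛ) = {sΛ} := by rw [sΛ, uΛ, pΛ]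
  rw [e1, e2]
  constructor
  · refine Submodule.smul_le.mpr fun a ha b hb => ?_
    induction ha using Submodule.span_induction with
    | mem x hx =>
        rw [smul_eq_mul]
        rcases hx with h | h
        · subst h; exact (gen_mul_mem hb).1
        · rw [Set.mem_singleton_iff] at h; subst h; exact (gen_mul_mem hb).2
    | zero => rw [zero_smul]; exact Ideal.zero_mem _
    | add x y _ _ hx hy => rw [add_smul]; exact Ideal.add_mem _ hx hy
    | smul r x _ hx =>
        rw [smul_eq_mul, smul_eq_mul, mul_assoc]
        exact Ideal.mul_mem_left _ _ (by rwa [smul_eq_mul] at hx)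
  · rw [Ideal.span_le]
    intro x hx
    rw [Set.mem_singleton_iff] at hx
    subst hx
    have hsform : sΛ = uΛ + ζc 0 * θΛ := by
      rw [sΛ, θΛ, mul_sub, ζsq, zero_sub, pΛ]
      abel
    rw [hsform]
    exact Ideal.add_mem _ (Ideal.subset_span (Or.inl rfl))
      (Ideal.mul_mem_left _ _ (Ideal.subset_span (Or.inr rfl)))
end

section
/- For any commutative ring R, the set R((t))^√ of formal Laurent series over R all of whose coefficients in strictly negative degrees are nilpotent is an R-subalgebra of the Laurent series ring R((t)): it contains the constants, and is closed under addition and multiplication. -/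
/-- `R((t))^√`: the set of formal Laurent series over `R` all of whose coefficients in
strictly negative degrees are nilpotent. -/
def sqrtLaurent (R : Type*) [CommRing R] : Set (LaurentSeries R) :=
  {f | ∀ i : ℤ, i < 0 → IsNilpotent (f.coeff i)}

/-- `R((t))^√` is an `R`-subalgebra of `R((t))`: it contains the constants (the image of
`R`), and is closed under addition and multiplication. -/
theorem sqrtLaurent_isSubalgebra (R : Type*) [CommRing R] :
    (∀ r : R, algebraMap R (LaurentSeries R) r ∈ sqrtLaurent R) ∧
    (∀ f g : LaurentSeries R, f ∈ sqrtLaurent R → g ∈ sqrtLaurent R →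
      f + g ∈ sqrtLaurent R) ∧
    (∀ f g : LaurentSeries R, f ∈ sqrtLaurent R → g ∈ sqrtLaurent R →
      f * g ∈ sqrtLaurent R) ∧
    ∃ A : Subalgebra R (LaurentSeries R), (A : Set (LaurentSeries R)) = sqrtLaurent R := by
  have halg : ∀ r : R, algebraMap R (LaurentSeries R) r ∈ sqrtLaurent R := by
    intro r i hi
    have : (algebraMap R (LaurentSeries R) r).coeff i = 0 := by
      rw [HahnSeries.algebraMap_apply', HahnSeries.ofPowerSeries_apply,
        HahnSeries.embDomain_notin_range]
      rintro ⟨n, hn⟩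
      simp only [RelEmbedding.coe_mk, Function.Embedding.coeFn_mk, Nat.castOrderEmbedding_apply] at hn
      omega
    rw [this]
    exact IsNilpotent.zero
  have hadd : ∀ f g : LaurentSeries R, f ∈ sqrtLaurent R → g ∈ sqrtLaurent R →
      f + g ∈ sqrtLaurent R := by
    intro f g hf hg i hi
    rw [HahnSeries.coeff_add]
    exact Commute.isNilpotent_add (Commute.all _ _) (hf i hi) (hg i hi)
  have hmul : ∀ f g : LaurentSeries R, f ∈ sqrtLaurent R → g ∈ sqrtLaurent R →
      f * g ∈ sqrtLaurent R := by
    intro f g hf hg i hi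
    rw [HahnSeries.coeff_mul]
    refine isNilpotent_sum fun ij hij => ?_
    rcases lt_or_ge ij.1 0 with h | h
    · exact (Commute.all _ _).isNilpotent_mul_right (hf ij.1 h)
    · have h2 : ij.2 < 0 := by
        have := (Finset.mem_addAntidiagonal.mp hij).2.2
        omega
      exact (Commute.all _ _).isNilpotent_mul_left (hg ij.2 h2)
  refine ⟨halg, hadd, hmul, ⟨{
    carrier := sqrtLaurent R
    add_mem' := fun ha hb => hadd _ _ ha hb
    mul_mem' := fun ha hb => hmul _ _ ha hb
    algebraMap_mem' := halg }, rfl⟩⟩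
end

section
/- Let R be a local commutative ring. An element f of R((t))^√ (a Laurent series over R whose negative-degree coefficients are nilpotent) is a unit of the ring R((t))^√ if and only if its constant coefficient f₀ is a unit of R. -/
/-- `R((t))^√`: the subring of `R((t))` consisting of Laurent series all of whose
coefficients in strictly negative degrees are nilpotent. -/
def sqrtLaurentSubring (R : Type*) [CommRing R] : Subring (LaurentSeries R) where
  carrier := {f | ∀ i : ℤ, i < 0 → IsNilpotent (f.coeff i)}
  zero_mem' := by
    intro i _
    simp [HahnSeries.coeff_zero]
  one_mem' := by
    intro i hi
    rw [HahnSeries.coeff_one, if_neg (by omega)]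
    exact IsNilpotent.zero
  add_mem' := by
    intro f g hf hg i hi
    rw [HahnSeries.coeff_add]
    exact Commute.isNilpotent_add (Commute.all _ _) (hf i hi) (hg i hi)
  neg_mem' := by
    intro f hf i hi
    rw [HahnSeries.coeff_neg]
    exact (hf i hi).neg
  mul_mem' := by
    intro f g hf hg i hi
    rw [HahnSeries.coeff_mul]
    refine isNilpotent_sum fun ij hij => ?_
    rw [Finset.mem_addAntidiagonal] at hij
    rcases lt_or_ge ij.1 0 with h1 | h1
    · exact (Commute.all _ _).isNilpotent_mul_right (hf ij.1 h1)
    · have h2 : ij.2 < 0 := by omega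
      exact (Commute.all _ _).isNilpotent_mul_left (hg ij.2 h2)

/-- A Laurent series with finite support and all coefficients nilpotent is nilpotent. -/
lemma isNilpotent_of_forall_coeff {R : Type*} [CommRing R] (x : LaurentSeries R)
    (hfin : x.support.Finite) (hnil : ∀ i : ℤ, IsNilpotent (x.coeff i)) :
    IsNilpotent x := by
  have hx : x = ∑ i ∈ hfin.toFinset, HahnSeries.single i (x.coeff i) := by
    ext j
    show x.coeff j = HahnSeries.coeff.addMonoidHom j (∑ i ∈ hfin.toFinset, HahnSeries.single i (x.coeff i))
    rw [map_sum (HahnSeries.coeff.addMonoidHom j)]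
    simp only [HahnSeries.coeff.addMonoidHom, AddMonoidHom.coe_mk, ZeroHom.coe_mk]
    by_cases hj : j ∈ hfin.toFinset
    · rw [Finset.sum_eq_single_of_mem j hj
        (fun a _ ha => HahnSeries.coeff_single_of_ne (Ne.symm ha)),
        HahnSeries.coeff_single_same]
    · rw [Finset.sum_eq_zero
        (fun a ha => HahnSeries.coeff_single_of_ne (fun h : j = a => hj (h ▸ ha)))]
      simp only [Set.Finite.mem_toFinset, HahnSeries.mem_support, not_not] at hj
      exact hj
  rw [hx]
  refine isNilpotent_sum fun i _ => ?_
  obtain ⟨k, hk⟩ := hnil i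
  exact ⟨k, by rw [HahnSeries.single_pow, hk, HahnSeries.single_eq_zero]⟩

lemma ofPowerSeries_coeff_neg {R : Type*} [CommRing R] (P : PowerSeries R) (i : ℤ)
    (hi : i < 0) : (HahnSeries.ofPowerSeries ℤ R P).coeff i = 0 := by
  rw [HahnSeries.ofPowerSeries_apply]
  apply HahnSeries.embDomain_of_notMem_range
  rintro ⟨n, hn⟩
  simp only [Nat.castOrderEmbedding_apply] at hn
  omega

/-- For a local commutative ring `R`, an element `f` of `R((t))^√` is a unit of the ring
`R((t))^√` if and only if its constant coefficient `f₀` is a unit of `R`. -/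
theorem isUnit_sqrtLaurent_iff (R : Type*) [CommRing R] [IsLocalRing R]
    (f : sqrtLaurentSubring R) :
    IsUnit f ↔ IsUnit ((f : LaurentSeries R).coeff 0) := by
  constructor
  · intro h
    obtain ⟨g, hg⟩ := h.exists_right_inv
    have h1 : ((f : LaurentSeries R) * (g : LaurentSeries R)).coeff 0 = 1 := by
      have := congrArg (fun x : sqrtLaurentSubring R => (x : LaurentSeries R).coeff 0) hg
      simpa using this
    rw [HahnSeries.coeff_mul] at h1
    set F : ℤ × ℤ → R := fun ij => (f : LaurentSeries R).coeff ij.1 *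
      (g : LaurentSeries R).coeff ij.2 with hF
    set s := Finset.antidiagonal (f : LaurentSeries R).isPWO_support
      (g : LaurentSeries R).isPWO_support 0 with hs
    have h2 : ∑ ij ∈ insert ((0 : ℤ), (0 : ℤ)) s, F ij = ∑ ij ∈ s, F ij := by
      refine Finset.sum_insert_of_eq_zero_if_notMem fun hmem => ?_
      rw [hs, Finset.mem_antidiagonal] at hmem
      simp only [HahnSeries.mem_support, add_zero, and_true, not_and_or, not_not] at hmem
      rcases hmem with h0 | h0 <;> simp [hF, h0]
    have h3 : F (0, 0) + ∑ ij ∈ (insert ((0 : ℤ), (0 : ℤ)) s).erase (0, 0), F ij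
        = ∑ ij ∈ insert ((0 : ℤ), (0 : ℤ)) s, F ij :=
      Finset.add_sum_erase _ F (Finset.mem_insert_self _ _)
    have hNnil : IsNilpotent (∑ ij ∈ (insert ((0 : ℤ), (0 : ℤ)) s).erase (0, 0), F ij) := by
      refine isNilpotent_sum fun ij hij => ?_
      rw [Finset.mem_erase, Finset.mem_insert] at hij
      obtain ⟨hne, hij⟩ := hij
      rcases hij with h0 | h0
      · exact absurd h0 hne
      · rw [hs, Finset.mem_antidiagonal] at h0
        have hsum : ij.1 + ij.2 = 0 := by simpa using h0.2.2
        rcases lt_trichotomy ij.1 0 with hlt | heq | hgt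
        · exact (Commute.all _ _).isNilpotent_mul_right (f.2 ij.1 hlt)
        · have : ij.2 = 0 := by omega
          exact absurd (Prod.ext heq this) hne
        · exact (Commute.all _ _).isNilpotent_mul_left (g.2 ij.2 (by omega))
    have key : F (0, 0) = 1 - ∑ ij ∈ (insert ((0 : ℤ), (0 : ℤ)) s).erase (0, 0), F ij := by
      rw [eq_sub_iff_add_eq, h3, h2, ← h1]
    have hFU : IsUnit (F (0, 0)) := by
      rw [key]; exact hNnil.isUnit_one_sub
    exact isUnit_of_mul_isUnit_left hFU
  · intro h
    set P : PowerSeries R := PowerSeries.mk fun n => (f : LaurentSeries R).coeff n with hP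
    have hPunit : IsUnit P := by
      rw [PowerSeries.isUnit_iff_constantCoeff]
      simpa [hP, ← PowerSeries.coeff_zero_eq_constantCoeff] using h
    obtain ⟨u, hu⟩ := hPunit
    set g : LaurentSeries R := HahnSeries.ofPowerSeries ℤ R P with hgdef
    have hgmem : g ∈ sqrtLaurentSubring R := fun i hi => by
      rw [hgdef, ofPowerSeries_coeff_neg P i hi]; exact IsNilpotent.zero
    set ginv : LaurentSeries R := HahnSeries.ofPowerSeries ℤ R ((u⁻¹ : (PowerSeries R)ˣ) : PowerSeries R)
      with hginvdef
    have hginvmem : ginv ∈ sqrtLaurentSubring R := fun i hi => by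
      rw [hginvdef, ofPowerSeries_coeff_neg _ i hi]; exact IsNilpotent.zero
    have hgmul : g * ginv = 1 := by
      rw [hgdef, hginvdef, ← map_mul, ← hu, Units.mul_inv, map_one]
    -- the negative part
    set n : LaurentSeries R := (f : LaurentSeries R) - g with hndef
    have hncoeff_pos : ∀ i : ℤ, 0 ≤ i → n.coeff i = 0 := by
      intro i hi
      obtain ⟨m, rfl⟩ := Int.eq_ofNat_of_zero_le hi
      rw [hndef, HahnSeries.coeff_sub, hgdef, HahnSeries.ofPowerSeries_apply_coeff, hP,
        PowerSeries.coeff_mk, sub_self]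
    have hncoeff_neg : ∀ i : ℤ, i < 0 → n.coeff i = (f : LaurentSeries R).coeff i := by
      intro i hi
      rw [hndef, HahnSeries.coeff_sub, hgdef, ofPowerSeries_coeff_neg P i hi, sub_zero]
    have hnmem : n ∈ sqrtLaurentSubring R :=
      Subring.sub_mem _ f.2 hgmem
    have hnfin : n.support.Finite := by
      apply Set.Finite.subset (Set.finite_Icc ((f : LaurentSeries R).order) (-1))
      intro i hi
      rw [HahnSeries.mem_support] at hi
      have hineg : i < 0 := by
        by_contra hge
        exact hi (hncoeff_pos i (by omega))
      have hfne : (f : LaurentSeries R).coeff i ≠ 0 := by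
        rw [← hncoeff_neg i hineg]; exact hi
      exact ⟨HahnSeries.order_le_of_coeff_ne_zero hfne, by omega⟩
    have hnnil : IsNilpotent n := by
      refine isNilpotent_of_forall_coeff n hnfin fun i => ?_
      rcases lt_or_ge i 0 with hi | hi
      · rw [hncoeff_neg i hi]; exact f.2 i hi
      · rw [hncoeff_pos i hi]; exact IsNilpotent.zero
    -- assemble in the subring
    set N : sqrtLaurentSubring R := ⟨n, hnmem⟩ with hN
    set G : sqrtLaurentSubring R := ⟨g, hgmem⟩ with hG
    have hNnil : IsNilpotent N := by
      obtain ⟨k, hk⟩ := hnnil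
      exact ⟨k, Subtype.ext (by rw [SubmonoidClass.coe_pow]; exact hk)⟩
    have hGunit : IsUnit G := by
      exact IsUnit.of_mul_eq_one (a := G) ⟨ginv, hginvmem⟩ (Subtype.ext hgmul)
    have hfeq : f = N + G := Subtype.ext (by simp [hN, hG, hndef])
    rw [hfeq, add_comm]
    exact hNnil.isUnit_add_left_of_commute hGunit (Commute.all _ _)
end

section
/- If R is a local commutative ring, then the ring R((t))^√ of formal Laurent series over R whose negative-degree coefficients are nilpotent is a local ring, with maximal ideal the set of series whose constant coefficient lies in the maximal ideal of R. (This is the key fact [KV04, Corollary 1.3.2] underlying the construction of the formal loop space as an ind-scheme of local-ring-valued points.) -/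
lemma mem_sqrtLaurentSubring {R : Type*} [CommRing R] {f : LaurentSeries R} :
    f ∈ sqrtLaurentSubring R ↔ ∀ i : ℤ, i < 0 → IsNilpotent (f.coeff i) :=
  Iff.rfl

lemma aux_coe_neg {R : Type*} [CommRing R] (x : PowerSeries R) (n : ℤ) (hn : n < 0) :
    (HahnSeries.ofPowerSeries ℤ R x).coeff n = 0 := by
  rw [HahnSeries.ofPowerSeries_apply, HahnSeries.embDomain_of_notMem_range]
  rintro ⟨m, hm⟩
  have hm' : (m : ℤ) = n := hm
  omega

/-- Key lemma: an element of `R((t))^√` with invertible constant coefficient has an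
inverse lying in `R((t))^√`. -/
lemma aux_key {R : Type*} [CommRing R] [Nontrivial R] (f : LaurentSeries R)
    (hf : f ∈ sqrtLaurentSubring R) (h0 : IsUnit (f.coeff 0)) :
    ∃ g ∈ sqrtLaurentSubring R, f * g = 1 := by
  classical
  rw [mem_sqrtLaurentSubring] at hf
  have hfne : f ≠ 0 := by
    intro h
    rw [h, HahnSeries.coeff_zero] at h0
    exact not_isUnit_zero h0
  -- the negative support is finite
  have hfin : (f.support ∩ Set.Iio 0).Finite := by
    apply Set.Finite.subset (Set.finite_Ico f.order 0)
    rintro i ⟨hi1, hi2⟩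
    exact ⟨HahnSeries.order_le_of_coeff_ne_zero hi1, hi2⟩
  set T : Finset ℤ := hfin.toFinset with hT
  have hTmem : ∀ i : ℤ, i ∈ T ↔ f.coeff i ≠ 0 ∧ i < 0 := by
    intro i
    simp [hT, Set.Finite.mem_toFinset, HahnSeries.mem_support]
  set fneg : LaurentSeries R := ∑ i ∈ T, HahnSeries.single i (f.coeff i) with hfneg
  have hfnegc : ∀ j : ℤ, fneg.coeff j = if j ∈ T then f.coeff j else 0 := by
    intro j
    have h1 : fneg.coeff j = ∑ i ∈ T, (HahnSeries.single i (f.coeff i)).coeff j :=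
      map_sum (HahnSeries.coeff.addMonoidHom j) (fun i => HahnSeries.single i (f.coeff i)) T
    by_cases hjT : j ∈ T
    · rw [if_pos hjT, h1, Finset.sum_eq_single_of_mem j hjT
        (fun i _ hij => HahnSeries.coeff_single_of_ne (fun h => hij h.symm)),
        HahnSeries.coeff_single_same]
    · rw [if_neg hjT, h1]
      apply Finset.sum_eq_zero
      intro i hi
      exact HahnSeries.coeff_single_of_ne (fun h => hjT (h ▸ hi))
  have hfnegmem : fneg ∈ sqrtLaurentSubring R := by
    rw [mem_sqrtLaurentSubring]
    intro j hj
    rw [hfnegc]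
    by_cases h : j ∈ T
    · rw [if_pos h]; exact hf j hj
    · rw [if_neg h]; exact IsNilpotent.zero
  have hfnegneg : ∀ j : ℤ, j < 0 → fneg.coeff j = f.coeff j := by
    intro j hj
    rw [hfnegc]
    by_cases h : j ∈ T
    · rw [if_pos h]
    · rw [if_neg h]
      by_contra hne
      exact h ((hTmem j).2 ⟨fun hc => hne hc.symm, hj⟩)
  have hfnegnil : IsNilpotent fneg := by
    apply isNilpotent_sum
    intro i hi
    obtain ⟨n, hn⟩ := hf i ((hTmem i).1 hi).2
    exact ⟨n, by rw [HahnSeries.single_pow, hn, HahnSeries.single_eq_zero]⟩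
  set fpos : LaurentSeries R := f - fneg with hfpos
  have hfposneg : ∀ j : ℤ, j < 0 → fpos.coeff j = 0 := by
    intro j hj
    rw [hfpos, HahnSeries.coeff_sub, hfnegneg j hj, sub_self]
  have hfpos0 : fpos.coeff 0 = f.coeff 0 := by
    rw [hfpos, HahnSeries.coeff_sub, hfnegc]
    rw [if_neg (fun h => absurd ((hTmem 0).1 h).2 (lt_irrefl 0)), sub_zero]
  -- fpos comes from a power series
  set p : PowerSeries R := PowerSeries.mk fun n => fpos.coeff n with hp
  have hpeq : HahnSeries.ofPowerSeries ℤ R p = fpos := by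
    ext z
    rcases z with n | n
    · show (HahnSeries.ofPowerSeries ℤ R p).coeff (n : ℤ) = fpos.coeff (n : ℤ)
      rw [HahnSeries.ofPowerSeries_apply_coeff, hp, PowerSeries.coeff_mk]
    · rw [aux_coe_neg p _ (Int.negSucc_lt_zero n), hfposneg _ (Int.negSucc_lt_zero n)]
  have hpu : IsUnit p := by
    rw [PowerSeries.isUnit_iff_constantCoeff]
    rw [← PowerSeries.coeff_zero_eq_constantCoeff_apply, hp, PowerSeries.coeff_mk]
    rw [show ((0 : ℕ) : ℤ) = 0 from rfl, hfpos0]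
    exact h0
  obtain ⟨u, hu⟩ := hpu
  set q : PowerSeries R := (↑u⁻¹ : PowerSeries R) with hq
  have hpq : p * q = 1 := by rw [← hu, hq, Units.mul_inv]
  set qL : LaurentSeries R := HahnSeries.ofPowerSeries ℤ R q with hqL
  have hqLmem : qL ∈ sqrtLaurentSubring R := by
    rw [mem_sqrtLaurentSubring]
    intro i hi
    rw [hqL, aux_coe_neg q i hi]
    exact IsNilpotent.zero
  have hfposqL : fpos * qL = 1 := by
    rw [← hpeq, hqL, ← map_mul, hpq, map_one]
  -- the nilpotent correction term
  set x : LaurentSeries R := qL * fneg with hx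
  have hxnil : IsNilpotent x := (Commute.all _ _).isNilpotent_mul_left hfnegnil
  obtain ⟨n, hxn⟩ := hxnil
  have hxmem : x ∈ sqrtLaurentSubring R := mul_mem hqLmem hfnegmem
  -- geometric series inverse
  set s : LaurentSeries R := ∑ k ∈ Finset.range n, (-x) ^ k with hs
  have hsmem : s ∈ sqrtLaurentSubring R :=
    sum_mem fun k _ => pow_mem (neg_mem hxmem) k
  have hgeom : (∑ k ∈ Finset.range n, (-x) ^ k) * (1 + x) = 1 := by
    have h3 := geom_sum_mul (-x) n
    have h4 : (-x) ^ n = 0 := by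
      rw [show (-x) = -1 * x by ring, mul_pow, hxn, mul_zero]
    rw [h4, zero_sub] at h3
    linear_combination -h3
  refine ⟨qL * s, mul_mem hqLmem hsmem, ?_⟩
  have hf' : f = fpos * (1 + x) := by
    rw [mul_add, mul_one, hx, ← mul_assoc, hfposqL, one_mul, hfpos]
    ring
  calc f * (qL * s) = (fpos * qL) * (s * (1 + x)) := by rw [hf']; ring
    _ = 1 := by rw [hfposqL, hs, hgeom, one_mul]

/-- Converse direction: if `f * g = 1` with both in `R((t))^√`, then the constant
coefficient of `f` is a unit. -/
lemma aux_conv {R : Type*} [CommRing R] {f g : LaurentSeries R}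
    (hf : f ∈ sqrtLaurentSubring R) (hg : g ∈ sqrtLaurentSubring R) (hfg : f * g = 1) :
    IsUnit (f.coeff 0) := by
  classical
  rw [mem_sqrtLaurentSubring] at hf hg
  have h1 : (f * g).coeff 0 = 1 := by rw [hfg, HahnSeries.coeff_one, if_pos rfl]
  rw [HahnSeries.coeff_mul] at h1
  set A := Finset.antidiagonal f.isPWO_support g.isPWO_support 0 with hA
  have hsplit := (Finset.sum_filter_add_sum_filter_not A (fun ij => ij.1 = 0)
    (fun ij => f.coeff ij.1 * g.coeff ij.2)).symm
  have hnil : IsNilpotent (∑ ij ∈ A.filter (fun ij => ¬ ij.1 = 0),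
      f.coeff ij.1 * g.coeff ij.2) := by
    refine isNilpotent_sum fun ij hij => ?_
    rw [Finset.mem_filter, hA, Finset.mem_antidiagonal] at hij
    obtain ⟨⟨_, _, hsum⟩, hne⟩ := hij
    rcases lt_or_ge ij.1 0 with hlt | hle
    · exact (Commute.all _ _).isNilpotent_mul_right (hf ij.1 hlt)
    · have h2 : ij.2 < 0 := by omega
      exact (Commute.all _ _).isNilpotent_mul_left (hg ij.2 h2)
  have hzero : ∑ ij ∈ A.filter (fun ij => ij.1 = 0), f.coeff ij.1 * g.coeff ij.2
      = f.coeff 0 * g.coeff 0 := by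
    by_cases h00 : ((0 : ℤ), (0 : ℤ)) ∈ A
    · have hset : A.filter (fun ij => ij.1 = 0) = {((0 : ℤ), (0 : ℤ))} := by
        ext ij
        simp only [Finset.mem_filter, Finset.mem_singleton]
        constructor
        · rintro ⟨hijA, hij1⟩
          rw [hA, Finset.mem_antidiagonal] at hijA
          obtain ⟨_, _, hsum⟩ := hijA
          have : ij.2 = 0 := by omega
          exact Prod.ext hij1 this
        · rintro rfl
          exact ⟨h00, rfl⟩
      rw [hset, Finset.sum_singleton]
    · have hset : A.filter (fun ij => ij.1 = 0) = ∅ := by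
        ext ij
        simp only [Finset.mem_filter, Finset.notMem_empty, iff_false, not_and]
        intro hijA hij1
        have hsum : ij.1 + ij.2 = 0 :=
          (Finset.mem_antidiagonal.mp (hA ▸ hijA)).2.2
        apply h00
        have hij : ij = ((0 : ℤ), (0 : ℤ)) := Prod.ext hij1 (by omega)
        rwa [hij] at hijA
      rw [hset, Finset.sum_empty]
      rw [hA, Finset.mem_antidiagonal] at h00
      push_neg at h00
      by_cases hf0 : f.coeff 0 = 0
      · rw [hf0, zero_mul]
      · have hg0 : g.coeff 0 = 0 := by
          by_contra hg0
          exact (h00 hf0 hg0) (add_zero 0)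
        rw [hg0, mul_zero]
  have hkey : f.coeff 0 * g.coeff 0
      = 1 - ∑ ij ∈ A.filter (fun ij => ¬ ij.1 = 0), f.coeff ij.1 * g.coeff ij.2 := by
    rw [hsplit] at h1
    rw [← hzero]
    linear_combination h1
  have : IsUnit (f.coeff 0 * g.coeff 0) := by
    rw [hkey]
    exact hnil.isUnit_one_sub
  exact isUnit_of_mul_isUnit_left this

/-- [KV04, Corollary 1.3.2]: if `R` is a local commutative ring, then `R((t))^√` is a
local ring, and its maximal ideal is the set of series whose constant coefficient lies in
the maximal ideal of `R`. -/
theorem isLocalRing_sqrtLaurent (R : Type*) [CommRing R] [IsLocalRing R] :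
    IsLocalRing (sqrtLaurentSubring R) ∧
    ∀ I : Ideal (sqrtLaurentSubring R), I.IsMaximal →
      ∀ f : sqrtLaurentSubring R,
        f ∈ I ↔ (f : LaurentSeries R).coeff 0 ∈ IsLocalRing.maximalIdeal R := by
  have hunit : ∀ f : sqrtLaurentSubring R,
      IsUnit f ↔ IsUnit ((f : LaurentSeries R).coeff 0) := by
    intro f
    constructor
    · intro h
      obtain ⟨u, hu⟩ := h
      have hmul : (f : LaurentSeries R)
          * (((u⁻¹ : Units (sqrtLaurentSubring R)) : sqrtLaurentSubring R) : LaurentSeries R)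
          = 1 := by
        rw [← hu]
        exact congrArg Subtype.val u.mul_inv
      exact aux_conv f.2 ((u⁻¹ : Units (sqrtLaurentSubring R)) : sqrtLaurentSubring R).2 hmul
    · intro h
      obtain ⟨g, hgmem, hg⟩ := aux_key (f : LaurentSeries R) f.2 h
      refine IsUnit.of_mul_eq_one (a := f) ⟨g, hgmem⟩ ?_
      exact Subtype.ext hg
  have hnt : Nontrivial (sqrtLaurentSubring R) := by
    refine ⟨0, 1, fun h => ?_⟩
    have := congrArg (fun x : sqrtLaurentSubring R => ((x : LaurentSeries R)).coeff 0) h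
    simp only [ZeroMemClass.coe_zero, OneMemClass.coe_one, HahnSeries.coeff_zero,
      HahnSeries.coeff_one, if_pos rfl] at this
    exact zero_ne_one this
  have hloc : IsLocalRing (sqrtLaurentSubring R) := by
    apply IsLocalRing.of_isUnit_or_isUnit_one_sub_self
    intro a
    rcases IsLocalRing.isUnit_or_isUnit_one_sub_self ((a : LaurentSeries R).coeff 0) with h | h
    · exact Or.inl ((hunit a).2 h)
    · refine Or.inr ((hunit (1 - a)).2 ?_)
      have : ((1 - a : sqrtLaurentSubring R) : LaurentSeries R).coeff 0
          = 1 - (a : LaurentSeries R).coeff 0 := by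
        rw [AddSubgroupClass.coe_sub, HahnSeries.coeff_sub, OneMemClass.coe_one, HahnSeries.coeff_one,
          if_pos rfl]
      rw [this]
      exact h
  refine ⟨hloc, fun I hI f => ?_⟩
  rw [IsLocalRing.eq_maximalIdeal hI, IsLocalRing.mem_maximalIdeal,
    IsLocalRing.mem_maximalIdeal, mem_nonunits_iff, mem_nonunits_iff]
  exact not_congr (hunit f)
end
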